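/- Let T be a bounded selfadjoint operator on a complex Hilbert space H and let a < b with [a, b] contained in the resolvent set of T. Then there exists ε > 0 such that ⟨(T - a)x, (T - b)x⟩ ≥ ε(b - a + ε)‖x‖² for all x ∈ H. -/

import Mathlib

open scoped InnerProductSpace

open Polynomial in
theorem stmt4 {H : Type*} [NormedAddCommGroup H] [InnerProductSpace ℂ H]
    [CompleteSpace H] (T : H →L[ℂ] H) (hT : IsSelfAdjoint T)
    (a b : ℝ) (hab : a < b)
    (hres : ∀ t ∈ Set.Icc a b, (t : ℂ) ∈ resolventSet ℂ T) :
    ∃ ε > 0, ∀ x : H,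
      ε * (b - a + ε) * ‖x‖ ^ 2 ≤ (⟪T x - (a : ℂ) • x, T x - (b : ℂ) • x⟫_ℂ).re := by
  classical
  set K : Set ℝ := Complex.ofReal ⁻¹' spectrum ℂ T with hK
  have hKclosed : IsClosed K :=
    (spectrum.isClosed (a := T)).preimage Complex.continuous_ofReal
  have hdisj : Disjoint (Set.Icc a b) K := by
    rw [Set.disjoint_left]
    intro t ht htK
    exact htK (hres t ht)
  obtain ⟨δ, hδ, hthick⟩ := hdisj.exists_thickenings isCompact_Icc hKclosed
  set ε := δ / 2 with hεdef
  have hε : 0 < ε := by positivity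
  have hεδ : ε < δ := by simp [hεdef]; linarith
  have hgap : ∀ t ∈ K, t ≤ a - ε ∨ b + ε ≤ t := by
    intro t ht
    by_contra hcon
    push_neg at hcon
    obtain ⟨h1, h2⟩ := hcon
    have htm : t ∈ Metric.thickening δ (Set.Icc a b) := by
      rw [Metric.mem_thickening_iff]
      rcases le_total t a with h | h
      · exact ⟨a, ⟨le_rfl, hab.le⟩, by
          rw [Real.dist_eq, abs_of_nonpos (by linarith)]; linarith⟩
      · rcases le_total t b with h' | h'
        · exact ⟨t, ⟨h, h'⟩, by simpa using hδ⟩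
        · exact ⟨b, ⟨hab.le, le_rfl⟩, by
            rw [Real.dist_eq, abs_of_nonneg (by linarith)]; linarith⟩
    have htm' : t ∈ Metric.thickening δ K := Metric.self_subset_thickening hδ _ ht
    exact Set.disjoint_left.mp hthick htm htm'
  set c : ℝ := ε * (b - a + ε) with hcdef
  set q : ℂ[X] := (X - C (a : ℂ)) * (X - C (b : ℂ)) - C (c : ℂ) with hqdef
  set A : H →L[ℂ] H := Polynomial.aeval T q with hAdef
  have hA_eq : A = (T - (a : ℂ) • 1) * (T - (b : ℂ) • 1) - (c : ℂ) • 1 := by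
    simp [hAdef, hqdef, Algebra.algebraMap_eq_smul_one]
  have hdeg : 0 < q.degree := by
    have h2 : ((X - C (a : ℂ)) * (X - C (b : ℂ))).degree = 2 := by
      rw [Polynomial.degree_mul, Polynomial.degree_X_sub_C, Polynomial.degree_X_sub_C]
      rfl
    have : q.degree = 2 := by
      rw [hqdef, Polynomial.degree_sub_eq_left_of_degree_lt, h2]
      rw [h2]
      exact lt_of_le_of_lt Polynomial.degree_C_le (by norm_num)
    rw [this]; norm_num
  have hspec : spectrum ℂ A = (fun k => Polynomial.eval k q) '' spectrum ℂ T :=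
    spectrum.map_polynomial_aeval_of_degree_pos T q hdeg
  have hsa1 : IsSelfAdjoint (T - (a : ℂ) • (1 : H →L[ℂ] H)) := by
    rw [IsSelfAdjoint, star_sub, hT.star_eq, star_smul, star_one, Complex.star_def,
      Complex.conj_ofReal]
  have hsa2 : IsSelfAdjoint (T - (b : ℂ) • (1 : H →L[ℂ] H)) := by
    rw [IsSelfAdjoint, star_sub, hT.star_eq, star_smul, star_one, Complex.star_def,
      Complex.conj_ofReal]
  have hcomm : (T - (b : ℂ) • 1) * (T - (a : ℂ) • 1)
      = (T - (a : ℂ) • 1) * (T - (b : ℂ) • 1) := by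
    simp only [sub_mul, mul_sub, mul_smul_comm, smul_mul_assoc, mul_one, one_mul]
    module
  have hsaA : IsSelfAdjoint A := by
    rw [hA_eq]
    refine IsSelfAdjoint.sub ?_ ?_
    · rw [IsSelfAdjoint, star_mul, hsa1.star_eq, hsa2.star_eq, hcomm]
    · refine IsSelfAdjoint.smul ?_ (IsSelfAdjoint.one _)
      rw [IsSelfAdjoint, Complex.star_def]
      exact Complex.conj_ofReal _
  have hnn : (0 : H →L[ℂ] H) ≤ A := by
    rw [StarOrderedRing.nonneg_iff_spectrum_nonneg (R := ℝ) A hsaA]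
    intro x hx
    have hx' : (x : ℂ) ∈ spectrum ℂ A := by
      have := spectrum.algebraMap_mem ℂ hx
      simpa using this
    rw [hspec] at hx'
    obtain ⟨k, hk, hk2⟩ := hx'
    have hkre : k = (k.re : ℂ) := hT.mem_spectrum_eq_re hk
    set t : ℝ := k.re with htdef
    have htK : t ∈ K := by
      rw [hK, Set.mem_preimage, ← hkre]; exact hk
    have hx_eq : (x : ℂ) = (((t - a) * (t - b) - c : ℝ) : ℂ) := by
      rw [← hk2, hkre, hqdef]
      push_cast
      simp
    have hx_eq' : x = (t - a) * (t - b) - c := by exact_mod_cast hx_eq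
    rw [hx_eq', hcdef]
    rcases hgap t htK with h | h <;> nlinarith
  have hpos := (ContinuousLinearMap.nonneg_iff_isPositive A).mp hnn
  refine ⟨ε, hε, fun x => ?_⟩
  have h0 := hpos.inner_nonneg_left x
  have hAx : A x = (T - (a : ℂ) • 1) ((T - (b : ℂ) • 1) x) - (c : ℂ) • x := by
    rw [hA_eq]
    simp [ContinuousLinearMap.mul_apply]
  have h1 : T x - (a : ℂ) • x = (T - (a : ℂ) • 1) x := by simp
  have h2 : T x - (b : ℂ) • x = (T - (b : ℂ) • 1) x := by simp
  have hadj : ContinuousLinearMap.adjoint (T - (a : ℂ) • 1) = T - (a : ℂ) • 1 := by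
    rw [← ContinuousLinearMap.star_eq_adjoint, hsa1.star_eq]
  have hinner : ⟪T x - (a : ℂ) • x, T x - (b : ℂ) • x⟫_ℂ
      = ⟪x, (T - (a : ℂ) • 1) ((T - (b : ℂ) • 1) x)⟫_ℂ := by
    rw [h1, h2]
    conv_lhs => rw [← hadj]
    rw [ContinuousLinearMap.adjoint_inner_left]
  have hre : (⟪T x - (a : ℂ) • x, T x - (b : ℂ) • x⟫_ℂ).re
      = (⟪(T - (a : ℂ) • 1) ((T - (b : ℂ) • 1) x), x⟫_ℂ).re := by
    rw [hinner, ← inner_conj_symm]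
    exact (Complex.conj_re _).symm
  have h0' : 0 ≤ (⟪A x, x⟫_ℂ).re := by
    open scoped ComplexOrder in
    have h0s : (0 : ℂ) ≤ ⟪A x, x⟫_ℂ := by simpa using h0
    simpa using (Complex.le_def.mp h0s).1
  have hxx : ⟪x, x⟫_ℂ = ((‖x‖ ^ 2 : ℝ) : ℂ) := by
    rw [inner_self_eq_norm_sq_to_K]; norm_num
  have hconj : (starRingEnd ℂ) ((c : ℝ) : ℂ) = ((c : ℝ) : ℂ) := Complex.conj_ofReal _
  rw [hAx, inner_sub_left, inner_smul_left, hconj, hxx, ← Complex.ofReal_mul,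
    Complex.sub_re, Complex.ofReal_re] at h0'
  rw [hre, hcdef] at *
  linarith [h0']
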